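/- Let Λ_1, Γ_1 be quantum channels on ℂ^d and Λ_2, Γ_2 be quantum channels on ℂ^{d'}. Let Λ_1 ⊗ Λ_2 denote the quantum channel on ℂ^{dd'} determined by (Λ_1 ⊗ Λ_2)(A ⊗ B) = Λ_1(A) ⊗ Λ_2(B) on Kronecker products, and similarly for Γ_1 ⊗ Γ_2. Then d_av^ch(Λ_1 ⊗ Λ_2, Γ_1 ⊗ Γ_2) ≤ d_av^ch(Λ_1, Γ_1) + d_av^ch(Λ_2, Γ_2). -/

import Mathlib

open Matrix Kronecker ComplexOrder

/-- The Hilbert–Schmidt (Frobenius) norm of a complex matrix. -/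
noncomputable def hsNorm {n : Type*} [Fintype n] (A : Matrix n n ℂ) : ℝ :=
  Real.sqrt ((Matrix.trace (Aᴴ * A)).re)

/-- The (normalized) Choi matrix `J_Λ = (1/d) ∑ᵢⱼ E_ij ⊗ Λ(E_ij)` of a linear map on matrices. -/
noncomputable def choi {n : Type*} [Fintype n] [DecidableEq n]
    (Λ : Matrix n n ℂ →ₗ[ℂ] Matrix n n ℂ) : Matrix (n × n) (n × n) ℂ :=
  ((Fintype.card n : ℂ))⁻¹ •
    ∑ i, ∑ j, (Matrix.single i j (1 : ℂ)) ⊗ₖ Λ (Matrix.single i j (1 : ℂ))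

/-- A quantum channel: a completely positive (positive semidefinite Choi matrix)
trace-preserving linear map. -/
def IsChannel {n : Type*} [Fintype n] [DecidableEq n]
    (Λ : Matrix n n ℂ →ₗ[ℂ] Matrix n n ℂ) : Prop :=
  (choi Λ).PosSemidef ∧ ∀ X, (Λ X).trace = X.trace

/-- The average-case distance between quantum channels,
`(1/2) √(‖J_Λ − J_Γ‖_HS² + ‖(Λ−Γ)(I/d)‖_HS²)`. -/
noncomputable def davCh {n : Type*} [Fintype n] [DecidableEq n]
    (Λ Γ : Matrix n n ℂ →ₗ[ℂ] Matrix n n ℂ) : ℝ :=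
  (1 / 2) * Real.sqrt ((hsNorm (choi Λ - choi Γ)) ^ 2 +
    (hsNorm (Λ (((Fintype.card n : ℂ))⁻¹ • 1) - Γ (((Fintype.card n : ℂ))⁻¹ • 1))) ^ 2)


lemma hsNorm_eq_sqrt_sum {n : Type*} [Fintype n] (A : Matrix n n ℂ) :
    hsNorm A = Real.sqrt (∑ i, ∑ j, Complex.normSq (A i j)) := by
  have h : (Aᴴ * A).trace = ((∑ i, ∑ j, Complex.normSq (A i j) : ℝ) : ℂ) := by
    simp only [Matrix.trace, Matrix.diag, Matrix.mul_apply, Matrix.conjTranspose_apply]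
    push_cast
    rw [Finset.sum_comm]
    refine Finset.sum_congr rfl fun i _ => Finset.sum_congr rfl fun j _ => ?_
    rw [Complex.normSq_eq_conj_mul_self, starRingEnd_apply]
  rw [hsNorm, h, Complex.ofReal_re]

lemma sum_sum_normSq_nonneg {n : Type*} [Fintype n] (A : Matrix n n ℂ) :
    0 ≤ ∑ i, ∑ j, Complex.normSq (A i j) :=
  Finset.sum_nonneg fun _ _ => Finset.sum_nonneg fun _ _ => Complex.normSq_nonneg _

lemma hsNorm_eq_norm {n : Type*} [Fintype n] (A : Matrix n n ℂ) :
    hsNorm A = ‖(WithLp.equiv 2 (n × n → ℂ)).symm (fun p => A p.1 p.2)‖ := by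
  rw [hsNorm_eq_sqrt_sum, EuclideanSpace.norm_eq]
  congr 1
  rw [Fintype.sum_prod_type]
  refine Finset.sum_congr rfl fun i _ => Finset.sum_congr rfl fun j _ => ?_
  simp [Complex.sq_norm]

lemma hsNorm_nonneg {n : Type*} [Fintype n] (A : Matrix n n ℂ) : 0 ≤ hsNorm A :=
  Real.sqrt_nonneg _

lemma hsNorm_add_le {n : Type*} [Fintype n] (A B : Matrix n n ℂ) :
    hsNorm (A + B) ≤ hsNorm A + hsNorm B := by
  simp only [hsNorm_eq_norm]
  have h : (WithLp.equiv 2 (n × n → ℂ)).symm (fun p => (A + B) p.1 p.2)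
      = (WithLp.equiv 2 (n × n → ℂ)).symm (fun p => A p.1 p.2)
        + (WithLp.equiv 2 (n × n → ℂ)).symm (fun p => B p.1 p.2) := rfl
  rw [h]
  exact norm_add_le _ _

lemma hsNorm_kronecker {n m : Type*} [Fintype n] [Fintype m]
    (A : Matrix n n ℂ) (B : Matrix m m ℂ) :
    hsNorm (A ⊗ₖ B) = hsNorm A * hsNorm B := by
  simp only [hsNorm_eq_sqrt_sum]
  rw [← Real.sqrt_mul (sum_sum_normSq_nonneg A)]
  congr 1
  simp only [Fintype.sum_prod_type, Matrix.kroneckerMap_apply, Complex.normSq_mul]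
  simp_rw [← Finset.mul_sum, ← Finset.sum_mul, ← Finset.mul_sum]
  rw [← Finset.sum_mul]

lemma hsNorm_submatrix {n m : Type*} [Fintype n] [Fintype m] (e : n ≃ m) (M : Matrix m m ℂ) :
    hsNorm (M.submatrix e e) = hsNorm M := by
  simp only [hsNorm_eq_sqrt_sum]
  congr 1
  calc ∑ i, ∑ j, Complex.normSq (M.submatrix e e i j)
      = ∑ i, ∑ j, Complex.normSq (M (e i) j) :=
        Finset.sum_congr rfl fun i _ => Equiv.sum_comp e (fun j => Complex.normSq (M (e i) j))
    _ = ∑ i, ∑ j, Complex.normSq (M i j) :=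
        Equiv.sum_comp e (fun i => ∑ j, Complex.normSq (M i j))

lemma psd_diag_re_nonneg {n : Type*} [Fintype n] [DecidableEq n] {A : Matrix n n ℂ}
    (hA : A.PosSemidef) (i : n) : 0 ≤ (A i i).re := by
  have h := hA.re_dotProduct_nonneg (Pi.single i 1)
  simpa [dotProduct, Matrix.mulVec, Pi.single_apply] using h

lemma psd_diag_im_zero {n : Type*} [Fintype n] [DecidableEq n] {A : Matrix n n ℂ}
    (hA : A.PosSemidef) (i : n) : (A i i).im = 0 := by
  have h := hA.isHermitian.apply i i
  have h2 := congrArg Complex.im h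
  simp only [Complex.star_def, Complex.conj_im] at h2
  linarith

lemma psd_normSq_le {n : Type*} [Fintype n] [DecidableEq n] {A : Matrix n n ℂ}
    (hA : A.PosSemidef) (i j : n) :
    Complex.normSq (A i j) ≤ (A i i).re * (A j j).re := by
  by_cases hij : i = j
  · subst hij
    have him := psd_diag_im_zero hA i
    rw [Complex.normSq_apply, him]
    nlinarith []
  · set c := A i j with hc
    set α := (A i i).re with hα
    set β := (A j j).re with hβ
    set m := Complex.normSq c with hm
    have key : ∀ t : ℝ, 0 ≤ α * (t * t) + (-(2 * m)) * t + m * β := by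
      intro t
      have h := hA.re_dotProduct_nonneg (Pi.single i (t : ℂ) + Pi.single j (-(starRingEnd ℂ) c))
      have hji : A j i = (starRingEnd ℂ) c := by
        rw [← hA.isHermitian.apply j i]; rfl
      have hexp : dotProduct (star (Pi.single i (t : ℂ) + Pi.single j (-(starRingEnd ℂ) c)))
          (A *ᵥ (Pi.single i (t : ℂ) + Pi.single j (-(starRingEnd ℂ) c)))
          = (t : ℂ) * (t : ℂ) * A i i - 2 * t * m + m * A j j := by
        rw [Matrix.mulVec_add, Matrix.mulVec_single, Matrix.mulVec_single, star_add]
        have h1 : star (Pi.single i (t : ℂ)) = (Pi.single i ((t : ℝ) : ℂ) : n → ℂ) := by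
          rw [← Pi.single_star]; congr 1; simp
        have h2 : star (Pi.single j (-(starRingEnd ℂ) c)) = (Pi.single j (-c) : n → ℂ) := by
          rw [← Pi.single_star]; congr 1; simp only [star_neg, Complex.star_def, Complex.conj_conj]
        rw [h1, h2, add_dotProduct, single_dotProduct, single_dotProduct]
        simp only [Pi.add_apply, Pi.smul_apply, Matrix.col_apply, op_smul_eq_mul]
        simp only [Pi.add_apply, hji]
        have hcc : c * (starRingEnd ℂ) c = (m : ℂ) := by
          rw [hm, Complex.normSq_eq_conj_mul_self]; ring
        have hcc' : (starRingEnd ℂ) c * c = (m : ℂ) := by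
          rw [hm, Complex.normSq_eq_conj_mul_self]
        ring_nf
        rw [← hc, mul_assoc (t : ℂ) c ((starRingEnd ℂ) c), hcc]
        linear_combination (A j j - t) * hcc'
      rw [hexp] at h
      have : ((t : ℂ) * t * A i i - 2 * t * m + m * A j j).re
          = α * (t * t) + (-(2 * m)) * t + m * β := by
        simp [Complex.mul_re, Complex.sub_re, Complex.add_re, Complex.ofReal_re,
          Complex.ofReal_im, hα, hβ]
        ring
      rw [RCLike.re_to_complex, this] at h
      exact h
    have hd := discrim_le_zero key
    rw [discrim] at hd
    have hm0 : 0 ≤ m := Complex.normSq_nonneg c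
    have hα0 : 0 ≤ α := psd_diag_re_nonneg hA i
    have hβ0 : 0 ≤ β := psd_diag_re_nonneg hA j
    nlinarith [hd, mul_nonneg hα0 hβ0, hm0]

lemma trace_re_eq {n : Type*} [Fintype n] (A : Matrix n n ℂ) :
    A.trace.re = ∑ i, (A i i).re := by
  simp [Matrix.trace, Matrix.diag, Complex.re_sum]

lemma hsNorm_le_trace_re {n : Type*} [Fintype n] [DecidableEq n] {A : Matrix n n ℂ}
    (hA : A.PosSemidef) : hsNorm A ≤ A.trace.re := by
  have htr : 0 ≤ A.trace.re := by
    rw [trace_re_eq]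
    exact Finset.sum_nonneg fun i _ => psd_diag_re_nonneg hA i
  rw [hsNorm_eq_sqrt_sum]
  have hb : ∑ i, ∑ j, Complex.normSq (A i j) ≤ A.trace.re ^ 2 := by
    rw [trace_re_eq, sq, Finset.sum_mul_sum]
    exact Finset.sum_le_sum fun i _ => Finset.sum_le_sum fun j _ => psd_normSq_le hA i j
  calc Real.sqrt (∑ i, ∑ j, Complex.normSq (A i j)) ≤ Real.sqrt (A.trace.re ^ 2) :=
        Real.sqrt_le_sqrt hb
    _ = A.trace.re := by rw [Real.sqrt_sq htr]

lemma choi_apply {n : Type*} [Fintype n] [DecidableEq n]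
    (Λ : Matrix n n ℂ →ₗ[ℂ] Matrix n n ℂ) (i j i' j' : n) :
    choi Λ (i, j) (i', j') = ((Fintype.card n : ℂ))⁻¹ *
      (Λ (Matrix.single i i' (1 : ℂ))) j j' := by
  simp only [choi, Matrix.smul_apply, Matrix.sum_apply, Matrix.kroneckerMap_apply,
    Matrix.single, Matrix.of_apply, ite_mul, one_mul, zero_mul, smul_eq_mul]
  rw [Finset.sum_eq_single i]
  · rw [Finset.sum_eq_single i']
    · simp
    · intro x _ hx; simp [hx]
    · simp
  · intro b _ hb; simp [hb]
  · simp

lemma sum_stdBasisMatrix_diag {n : Type*} [Fintype n] [DecidableEq n] :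
    ∑ k : n, Matrix.single k k (1 : ℂ) = 1 := by
  ext a b
  rw [Matrix.sum_apply]
  by_cases h : a = b
  · subst h
    simp [Matrix.single, Matrix.one_apply, Finset.sum_ite_eq']
  · rw [Matrix.one_apply_ne h]
    refine Finset.sum_eq_zero fun k _ => ?_
    simp only [Matrix.single, Matrix.of_apply, ite_eq_right_iff, and_imp]
    rintro rfl rfl
    exact absurd rfl h

lemma trace_choi {n : Type*} [Fintype n] [DecidableEq n]
    {Λ : Matrix n n ℂ →ₗ[ℂ] Matrix n n ℂ} (hΛ : IsChannel Λ) (hn : Fintype.card n ≠ 0) :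
    (choi Λ).trace = 1 := by
  have : (choi Λ).trace = ∑ p : n × n, choi Λ p p := by
    simp [Matrix.trace, Matrix.diag]
  rw [this]
  rw [Fintype.sum_prod_type]
  have h1 : ∀ i : n, ∑ j : n, choi Λ (i, j) (i, j)
      = ((Fintype.card n : ℂ))⁻¹ * (Λ (Matrix.single i i (1 : ℂ))).trace := by
    intro i
    simp only [choi_apply]
    rw [← Finset.mul_sum]
    rfl
  simp only [h1, hΛ.2]
  have h2 : ∀ i : n, (Matrix.single i i (1 : ℂ)).trace = 1 := by
    intro i
    simp [Matrix.trace, Matrix.diag, Matrix.single, Finset.sum_ite_eq']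
  simp only [h2]
  rw [← Finset.mul_sum]
  simp [Finset.card_univ]
  rw [inv_mul_cancel₀]
  exact_mod_cast hn

/-- partial trace over first factor is PSD -/
lemma posSemidef_fstPartialTrace {n m : Type*} [Fintype n] [Fintype m] [DecidableEq n]
    [DecidableEq m] {M : Matrix (n × m) (n × m) ℂ} (hM : M.PosSemidef) :
    (Matrix.of fun a b => ∑ k : n, M (k, a) (k, b)).PosSemidef := by
  refine Matrix.PosSemidef.of_dotProduct_mulVec_nonneg ?_ ?_
  · ext a b
    simp only [Matrix.conjTranspose_apply, Matrix.of_apply, star_sum]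
    refine Finset.sum_congr rfl fun k _ => ?_
    exact hM.isHermitian.apply (k, a) (k, b)
  · intro x
    have key : dotProduct (star x) ((Matrix.of fun a b => ∑ k : n, M (k, a) (k, b)) *ᵥ x)
        = ∑ k : n, dotProduct (star (fun p : n × m => if p.1 = k then x p.2 else 0))
            (M *ᵥ (fun p : n × m => if p.1 = k then x p.2 else 0)) := by
      have hstar : ∀ k : n, star (fun p : n × m => if p.1 = k then x p.2 else 0)
          = fun p : n × m => if p.1 = k then star (x p.2) else 0 := by
        intro k; funext p; by_cases h : p.1 = k <;> simp [h]
      simp only [hstar, dotProduct, Matrix.mulVec, Matrix.of_apply, Pi.star_apply,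
        Fintype.sum_prod_type, ite_mul, mul_ite, mul_zero, zero_mul]
      simp_rw [Finset.sum_mul, Finset.mul_sum]
      simp only [apply_ite (star : ℂ → ℂ), star_zero, ite_mul, zero_mul, mul_ite, mul_zero,
        Finset.sum_ite_irrel, Finset.sum_const_zero]
      simp only [Finset.sum_ite_eq', Finset.mem_univ, if_true]
      simp only [Finset.sum_ite_irrel, Finset.sum_const_zero, Finset.sum_ite_eq',
        Finset.mem_univ, if_true]
      exact Eq.trans (Finset.sum_congr rfl fun a _ => Finset.sum_comm)
        Finset.sum_comm
    rw [key]
    exact Finset.sum_nonneg fun k _ => hM.dotProduct_mulVec_nonneg _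

lemma hsNorm_empty {n : Type*} [Fintype n] (hn : Fintype.card n = 0) (A : Matrix n n ℂ) :
    hsNorm A = 0 := by
  have : IsEmpty n := Fintype.card_eq_zero_iff.mp hn
  rw [hsNorm_eq_sqrt_sum]
  simp

lemma hsNorm_choi_le_one {n : Type*} [Fintype n] [DecidableEq n]
    {Λ : Matrix n n ℂ →ₗ[ℂ] Matrix n n ℂ} (hΛ : IsChannel Λ) : hsNorm (choi Λ) ≤ 1 := by
  by_cases hn : Fintype.card n = 0
  · have : IsEmpty (n × n) := by
      have : IsEmpty n := Fintype.card_eq_zero_iff.mp hn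
      infer_instance
    rw [hsNorm_empty (by simp [Fintype.card_prod, hn])]
    norm_num
  · calc hsNorm (choi Λ) ≤ (choi Λ).trace.re := hsNorm_le_trace_re hΛ.1
      _ = 1 := by rw [trace_choi hΛ hn]; simp

lemma state_eq_partialTrace {n : Type*} [Fintype n] [DecidableEq n]
    (Λ : Matrix n n ℂ →ₗ[ℂ] Matrix n n ℂ) :
    (Matrix.of fun a b => ∑ k : n, choi Λ (k, a) (k, b))
      = Λ (((Fintype.card n : ℂ))⁻¹ • 1) := by
  ext a b
  simp only [Matrix.of_apply, choi_apply]
  rw [← Finset.mul_sum]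
  have h1 : ∑ k : n, (Λ (Matrix.single k k (1 : ℂ))) a b = (Λ 1) a b := by
    rw [← Matrix.sum_apply, ← map_sum, sum_stdBasisMatrix_diag]
  rw [h1, _root_.map_smul]
  simp

lemma hsNorm_state_le_one {n : Type*} [Fintype n] [DecidableEq n]
    {Λ : Matrix n n ℂ →ₗ[ℂ] Matrix n n ℂ} (hΛ : IsChannel Λ) :
    hsNorm (Λ (((Fintype.card n : ℂ))⁻¹ • 1)) ≤ 1 := by
  by_cases hn : Fintype.card n = 0
  · rw [hsNorm_empty hn]; norm_num
  · have hpsd : (Λ (((Fintype.card n : ℂ))⁻¹ • 1)).PosSemidef := by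
      rw [← state_eq_partialTrace]
      exact posSemidef_fstPartialTrace hΛ.1
    calc hsNorm _ ≤ (Λ (((Fintype.card n : ℂ))⁻¹ • 1)).trace.re := hsNorm_le_trace_re hpsd
      _ = 1 := by
        rw [hΛ.2, Matrix.trace_smul, Matrix.trace_one]
        rw [smul_eq_mul, inv_mul_cancel₀ (by exact_mod_cast hn)]
        simp

lemma stdBasisMatrix_kron {n m : Type*} [DecidableEq n] [DecidableEq m]
    (i i' : n) (a a' : m) :
    Matrix.single ((i, a) : n × m) ((i', a') : n × m) (1 : ℂ)
      = Matrix.single i i' 1 ⊗ₖ Matrix.single a a' 1 := by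
  ext ⟨x, y⟩ ⟨z, w⟩
  simp only [Matrix.single, Matrix.of_apply, Matrix.kroneckerMap_apply, Prod.mk.injEq]
  split_ifs <;> simp_all

def kronIdxEquiv (n m : Type*) : ((n × m) × (n × m)) ≃ ((n × n) × (m × m)) where
  toFun p := ((p.1.1, p.2.1), (p.1.2, p.2.2))
  invFun q := ((q.1.1, q.2.1), (q.1.2, q.2.2))
  left_inv p := rfl
  right_inv q := rfl

lemma tri2 (x₁ x₂ y₁ y₂ : ℝ) (hx₁ : 0 ≤ x₁) (hx₂ : 0 ≤ x₂) (hy₁ : 0 ≤ y₁) (hy₂ : 0 ≤ y₂) :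
    Real.sqrt ((x₁ + x₂) ^ 2 + (y₁ + y₂) ^ 2)
      ≤ Real.sqrt (x₁ ^ 2 + y₁ ^ 2) + Real.sqrt (x₂ ^ 2 + y₂ ^ 2) := by
  set a := Real.sqrt (x₁ ^ 2 + y₁ ^ 2) with ha'
  set b := Real.sqrt (x₂ ^ 2 + y₂ ^ 2) with hb'
  have ha0 : 0 ≤ a := Real.sqrt_nonneg _
  have hb0 : 0 ≤ b := Real.sqrt_nonneg _
  have ha : a ^ 2 = x₁ ^ 2 + y₁ ^ 2 := Real.sq_sqrt (by positivity)
  have hb : b ^ 2 = x₂ ^ 2 + y₂ ^ 2 := Real.sq_sqrt (by positivity)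
  have hab : x₁ * x₂ + y₁ * y₂ ≤ a * b := by
    nlinarith [sq_nonneg (x₁ * y₂ - x₂ * y₁), mul_nonneg ha0 hb0,
      mul_nonneg (mul_nonneg hx₁ hx₂) (mul_nonneg hy₁ hy₂),
      mul_nonneg hx₁ hx₂, mul_nonneg hy₁ hy₂]
  have h1 : (x₁ + x₂) ^ 2 + (y₁ + y₂) ^ 2 ≤ (a + b) ^ 2 := by nlinarith
  calc Real.sqrt ((x₁ + x₂) ^ 2 + (y₁ + y₂) ^ 2) ≤ Real.sqrt ((a + b) ^ 2) :=
        Real.sqrt_le_sqrt h1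
    _ = a + b := Real.sqrt_sq (by positivity)

lemma choi_kron {n m : Type*} [Fintype n] [Fintype m] [DecidableEq n] [DecidableEq m]
    (Λ₁ : Matrix n n ℂ →ₗ[ℂ] Matrix n n ℂ) (Λ₂ : Matrix m m ℂ →ₗ[ℂ] Matrix m m ℂ)
    (Λ₁₂ : Matrix (n × m) (n × m) ℂ →ₗ[ℂ] Matrix (n × m) (n × m) ℂ)
    (h : ∀ A B, Λ₁₂ (A ⊗ₖ B) = Λ₁ A ⊗ₖ Λ₂ B) :
    choi Λ₁₂ = ((choi Λ₁) ⊗ₖ (choi Λ₂)).submatrix (kronIdxEquiv n m) (kronIdxEquiv n m) := by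
  ext ⟨⟨i, a⟩, ⟨j, b⟩⟩ ⟨⟨i', a'⟩, ⟨j', b'⟩⟩
  rw [Matrix.submatrix_apply]
  show choi Λ₁₂ ((i, a), (j, b)) ((i', a'), (j', b'))
    = ((choi Λ₁) ⊗ₖ (choi Λ₂)) ((i, j), (a, b)) ((i', j'), (a', b'))
  rw [choi_apply, Matrix.kroneckerMap_apply, choi_apply, choi_apply,
    stdBasisMatrix_kron, h, Matrix.kroneckerMap_apply]
  rw [Fintype.card_prod]
  push_cast
  rw [mul_inv]
  ring

theorem statement12 (d d' : ℕ)
    (Λ₁ Γ₁ : Matrix (Fin d) (Fin d) ℂ →ₗ[ℂ] Matrix (Fin d) (Fin d) ℂ)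
    (Λ₂ Γ₂ : Matrix (Fin d') (Fin d') ℂ →ₗ[ℂ] Matrix (Fin d') (Fin d') ℂ)
    (hΛ₁ : IsChannel Λ₁) (hΓ₁ : IsChannel Γ₁) (hΛ₂ : IsChannel Λ₂) (hΓ₂ : IsChannel Γ₂)
    (Λ₁₂ Γ₁₂ : Matrix (Fin d × Fin d') (Fin d × Fin d') ℂ →ₗ[ℂ]
      Matrix (Fin d × Fin d') (Fin d × Fin d') ℂ)
    (hΛ₁₂ : ∀ (A : Matrix (Fin d) (Fin d) ℂ) (B : Matrix (Fin d') (Fin d') ℂ),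
      Λ₁₂ (A ⊗ₖ B) = Λ₁ A ⊗ₖ Λ₂ B)
    (hΓ₁₂ : ∀ (A : Matrix (Fin d) (Fin d) ℂ) (B : Matrix (Fin d') (Fin d') ℂ),
      Γ₁₂ (A ⊗ₖ B) = Γ₁ A ⊗ₖ Γ₂ B) :
    davCh Λ₁₂ Γ₁₂ ≤ davCh Λ₁ Γ₁ + davCh Λ₂ Γ₂ := by
  set x₁ := hsNorm (choi Λ₁ - choi Γ₁) with hx₁'
  set x₂ := hsNorm (choi Λ₂ - choi Γ₂) with hx₂'
  set ρ₁ := Λ₁ (((Fintype.card (Fin d) : ℂ))⁻¹ • 1) with hρ₁'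
  set σ₁ := Γ₁ (((Fintype.card (Fin d) : ℂ))⁻¹ • 1) with hσ₁'
  set ρ₂ := Λ₂ (((Fintype.card (Fin d') : ℂ))⁻¹ • 1) with hρ₂'
  set σ₂ := Γ₂ (((Fintype.card (Fin d') : ℂ))⁻¹ • 1) with hσ₂'
  set y₁ := hsNorm (ρ₁ - σ₁) with hy₁'
  set y₂ := hsNorm (ρ₂ - σ₂) with hy₂'
  have hx₁0 : 0 ≤ x₁ := hsNorm_nonneg _
  have hx₂0 : 0 ≤ x₂ := hsNorm_nonneg _
  have hy₁0 : 0 ≤ y₁ := hsNorm_nonneg _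
  have hy₂0 : 0 ≤ y₂ := hsNorm_nonneg _
  -- Choi part
  have hJ : hsNorm (choi Λ₁₂ - choi Γ₁₂) ≤ x₁ + x₂ := by
    rw [choi_kron Λ₁ Λ₂ Λ₁₂ hΛ₁₂, choi_kron Γ₁ Γ₂ Γ₁₂ hΓ₁₂]
    have hsub : ((choi Λ₁) ⊗ₖ (choi Λ₂)).submatrix (kronIdxEquiv (Fin d) (Fin d')) (kronIdxEquiv (Fin d) (Fin d'))
        - ((choi Γ₁) ⊗ₖ (choi Γ₂)).submatrix (kronIdxEquiv (Fin d) (Fin d')) (kronIdxEquiv (Fin d) (Fin d'))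
        = ((choi Λ₁) ⊗ₖ (choi Λ₂) - (choi Γ₁) ⊗ₖ (choi Γ₂)).submatrix
            (kronIdxEquiv (Fin d) (Fin d')) (kronIdxEquiv (Fin d) (Fin d')) := rfl
    rw [hsub, hsNorm_submatrix]
    have hdec : (choi Λ₁) ⊗ₖ (choi Λ₂) - (choi Γ₁) ⊗ₖ (choi Γ₂)
        = (choi Λ₁ - choi Γ₁) ⊗ₖ (choi Λ₂) + (choi Γ₁) ⊗ₖ (choi Λ₂ - choi Γ₂) := by
      ext ⟨p, q⟩ ⟨r, s⟩
      simp only [Matrix.sub_apply, Matrix.add_apply, Matrix.kroneckerMap_apply]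
      ring
    rw [hdec]
    calc hsNorm _ ≤ hsNorm ((choi Λ₁ - choi Γ₁) ⊗ₖ (choi Λ₂))
          + hsNorm ((choi Γ₁) ⊗ₖ (choi Λ₂ - choi Γ₂)) := hsNorm_add_le _ _
      _ = x₁ * hsNorm (choi Λ₂) + hsNorm (choi Γ₁) * x₂ := by
          rw [hsNorm_kronecker, hsNorm_kronecker]
      _ ≤ x₁ + x₂ := by
          have h1 : x₁ * hsNorm (choi Λ₂) ≤ x₁ :=
            mul_le_of_le_one_right hx₁0 (hsNorm_choi_le_one hΛ₂)
          have h2 : hsNorm (choi Γ₁) * x₂ ≤ x₂ :=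
            mul_le_of_le_one_left hx₂0 (hsNorm_choi_le_one hΓ₁)
          linarith
  -- state part
  have hcarrier : (((Fintype.card (Fin d × Fin d') : ℂ))⁻¹ • (1 : Matrix (Fin d × Fin d') (Fin d × Fin d') ℂ))
      = (((Fintype.card (Fin d) : ℂ))⁻¹ • (1 : Matrix (Fin d) (Fin d) ℂ))
        ⊗ₖ (((Fintype.card (Fin d') : ℂ))⁻¹ • (1 : Matrix (Fin d') (Fin d') ℂ)) := by
    rw [Matrix.smul_kronecker, Matrix.kronecker_smul, Matrix.one_kronecker_one, smul_smul,
      Fintype.card_prod]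
    push_cast
    rw [mul_inv]
  have hY : hsNorm (Λ₁₂ (((Fintype.card (Fin d × Fin d') : ℂ))⁻¹ • 1)
      - Γ₁₂ (((Fintype.card (Fin d × Fin d') : ℂ))⁻¹ • 1)) ≤ y₁ + y₂ := by
    rw [hcarrier, hΛ₁₂, hΓ₁₂, ← hρ₁', ← hρ₂', ← hσ₁', ← hσ₂']
    have hdec : ρ₁ ⊗ₖ ρ₂ - σ₁ ⊗ₖ σ₂ = (ρ₁ - σ₁) ⊗ₖ ρ₂ + σ₁ ⊗ₖ (ρ₂ - σ₂) := by
      ext ⟨p, q⟩ ⟨r, s⟩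
      simp only [Matrix.sub_apply, Matrix.add_apply, Matrix.kroneckerMap_apply]
      ring
    rw [hdec]
    calc hsNorm _ ≤ hsNorm ((ρ₁ - σ₁) ⊗ₖ ρ₂) + hsNorm (σ₁ ⊗ₖ (ρ₂ - σ₂)) := hsNorm_add_le _ _
      _ = y₁ * hsNorm ρ₂ + hsNorm σ₁ * y₂ := by rw [hsNorm_kronecker, hsNorm_kronecker]
      _ ≤ y₁ + y₂ := by
          have h1 : y₁ * hsNorm ρ₂ ≤ y₁ :=
            mul_le_of_le_one_right hy₁0 (hsNorm_state_le_one hΛ₂)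
          have h2 : hsNorm σ₁ * y₂ ≤ y₂ :=
            mul_le_of_le_one_left hy₂0 (hsNorm_state_le_one hΓ₁)
          linarith
  -- assemble
  rw [davCh, davCh, davCh]
  rw [← hx₁', ← hx₂', ← hρ₁', ← hσ₁', ← hρ₂', ← hσ₂', ← hy₁', ← hy₂']
  have step1 : Real.sqrt ((hsNorm (choi Λ₁₂ - choi Γ₁₂)) ^ 2
      + (hsNorm (Λ₁₂ (((Fintype.card (Fin d × Fin d') : ℂ))⁻¹ • 1)
        - Γ₁₂ (((Fintype.card (Fin d × Fin d') : ℂ))⁻¹ • 1))) ^ 2)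
      ≤ Real.sqrt ((x₁ + x₂) ^ 2 + (y₁ + y₂) ^ 2) := by
    apply Real.sqrt_le_sqrt
    have e1 : (hsNorm (choi Λ₁₂ - choi Γ₁₂)) ^ 2 ≤ (x₁ + x₂) ^ 2 :=
      pow_le_pow_left₀ (hsNorm_nonneg _) hJ 2
    have e2 : (hsNorm (Λ₁₂ (((Fintype.card (Fin d × Fin d') : ℂ))⁻¹ • 1)
        - Γ₁₂ (((Fintype.card (Fin d × Fin d') : ℂ))⁻¹ • 1))) ^ 2 ≤ (y₁ + y₂) ^ 2 :=
      pow_le_pow_left₀ (hsNorm_nonneg _) hY 2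
    linarith
  have step2 := tri2 x₁ x₂ y₁ y₂ hx₁0 hx₂0 hy₁0 hy₂0
  have := le_trans step1 step2
  linarith
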